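/- Let n ≥ 4 and let f ∈ ℚ[X] be an irreducible polynomial of degree n whose Galois group (of its splitting field over ℚ) is the full symmetric group S_n. Then f cannot have four distinct roots α_1, α_2, α_3, α_4 in ℂ with α_1 α_2 = α_3 α_4. -/

import Mathlib

/-- If f ∈ ℚ[X] is irreducible of degree n ≥ 4 with Galois group the full symmetric group
Sₙ (i.e. the Galois action on the complex roots is all of the permutation group), then f
cannot have four distinct roots α₁, α₂, α₃, α₄ with α₁α₂ = α₃α₄. -/
theorem sn_galois_no_multiplicative_relation (n : ℕ) (hn : 4 ≤ n) (f : Polynomial ℚ)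
    (hirr : Irreducible f) (hdeg : f.natDegree = n)
    (hgal : Function.Surjective
      (@Polynomial.Gal.galActionHom ℚ _ f ℂ _ _ Polynomial.Gal.splits_ℚ_ℂ)) :
    ¬ ∃ a b c d : ℂ, a ∈ f.rootSet ℂ ∧ b ∈ f.rootSet ℂ ∧ c ∈ f.rootSet ℂ ∧ d ∈ f.rootSet ℂ ∧
      a ≠ b ∧ a ≠ c ∧ a ≠ d ∧ b ≠ c ∧ b ≠ d ∧ c ≠ d ∧ a * b = c * d := by
  rintro ⟨a, b, c, d, ha, hb, hc, hd, hab, hac, had, hbc, hbd, hcd, hrel⟩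
  haveI : Fact (f.map (algebraMap ℚ ℂ)).Splits := Polynomial.Gal.splits_ℚ_ℂ
  set F := f.SplittingField with hF
  let ι : F →ₐ[ℚ] ℂ := IsScalarTower.toAlgHom ℚ F ℂ
  let e := Polynomial.Gal.rootsEquivRoots f ℂ
  have hι : ∀ x : f.rootSet ℂ, ι ↑(e.symm x) = (x : ℂ) := by
    intro x
    have : ((e (e.symm x) : f.rootSet ℂ) : ℂ) = (x : ℂ) := by
      rw [e.apply_symm_apply]
    exact this
  -- the relation holds in the splitting field
  have hrel' : (↑(e.symm ⟨a, ha⟩) : F) * ↑(e.symm ⟨b, hb⟩)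
      = (↑(e.symm ⟨c, hc⟩) : F) * ↑(e.symm ⟨d, hd⟩) := by
    apply RingHom.injective (ι : F →+* ℂ)
    simpa [map_mul, hι] using hrel
  -- main transfer lemma
  have main : ∀ σ : Equiv.Perm (f.rootSet ℂ),
      (σ ⟨a, ha⟩ : ℂ) * (σ ⟨b, hb⟩ : ℂ) = (σ ⟨c, hc⟩ : ℂ) * (σ ⟨d, hd⟩ : ℂ) := by
    intro σ
    obtain ⟨g, hg⟩ := hgal σ
    have hgx : ∀ x : f.rootSet ℂ, g ↑(e.symm x) = (↑(e.symm (σ x)) : F) := by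
      intro x
      have h1 : Polynomial.Gal.galActionHom f ℂ g x = σ x := by rw [hg]
      have h2 : g • e.symm x = e.symm (σ x) := by
        apply e.injective
        rw [e.apply_symm_apply]
        rw [← h1]
        rfl
      exact congrArg Subtype.val h2
    have := congrArg g hrel'
    rw [map_mul, map_mul, hgx ⟨a, ha⟩, hgx ⟨b, hb⟩, hgx ⟨c, hc⟩, hgx ⟨d, hd⟩] at this
    have := congrArg ι this
    simpa [map_mul, hι] using this
  -- nonvanishing
  have ha0 : a ≠ 0 := by
    rintro rfl
    have h0 : c * d = 0 := by rw [← hrel]; ring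
    rcases mul_eq_zero.mp h0 with h | h
    · exact hac h.symm
    · exact had h.symm
  have hb0 : b ≠ 0 := by
    rintro rfl
    have h0 : c * d = 0 := by rw [← hrel]; ring
    rcases mul_eq_zero.mp h0 with h | h
    · exact hbc h.symm
    · exact hbd h.symm
  have hd0 : d ≠ 0 := by
    rintro rfl
    have h0 : a * b = 0 := by rw [hrel]; ring
    rcases mul_eq_zero.mp h0 with h | h
    · exact had h
    · exact hbd h
  -- apply two transpositions
  have h2 := main (Equiv.swap ⟨a, ha⟩ ⟨c, hc⟩)
  rw [Equiv.swap_apply_left, Equiv.swap_apply_right,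
    Equiv.swap_apply_of_ne_of_ne (fun h => hab (congrArg Subtype.val h).symm)
      (fun h => hbc (congrArg Subtype.val h)),
    Equiv.swap_apply_of_ne_of_ne (fun h => had (congrArg Subtype.val h).symm)
      (fun h => hcd (congrArg Subtype.val h).symm)] at h2
  have h3 := main (Equiv.swap ⟨a, ha⟩ ⟨d, hd⟩)
  rw [Equiv.swap_apply_left, Equiv.swap_apply_right,
    Equiv.swap_apply_of_ne_of_ne (fun h => hab (congrArg Subtype.val h).symm)
      (fun h => hbd (congrArg Subtype.val h)),
    Equiv.swap_apply_of_ne_of_ne (fun h => hac (congrArg Subtype.val h).symm)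
      (fun h => hcd (congrArg Subtype.val h))] at h3
  -- h2 : c * b = a * d, h3 : d * b = c * a
  -- from hrel and h2 : a^2 = c^2 ; from hrel and h3 : b^2 = c^2
  have h2' : c * b = a * d := h2
  have h3' : d * b = c * a := h3
  have hA : a ^ 2 = c ^ 2 := by
    have e1 : a ^ 2 * b = c ^ 2 * b := by linear_combination a * hrel - c * h2'
    exact mul_right_cancel₀ hb0 e1
  have hB : b ^ 2 = c ^ 2 := by
    have e1 : b ^ 2 * (a * d) = c ^ 2 * (a * d) := by
      linear_combination b * d * hrel + c * d * h3'
    exact mul_right_cancel₀ (mul_ne_zero ha0 hd0) e1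
  have hac' : a = -c := by
    rcases sq_eq_sq_iff_eq_or_eq_neg.mp hA with h | h
    · exact absurd h hac
    · exact h
  have hbc' : b = -c := by
    rcases sq_eq_sq_iff_eq_or_eq_neg.mp hB with h | h
    · exact absurd h hbc
    · exact h
  exact hab (hac'.trans hbc'.symm)
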